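/- In the dual of c_0 (identified with ℓ_1), let E = { e_n* : n ∈ ℕ } be the set of coordinate functionals and F = {0}. Then E and F are each w*-LRC, but E ∪ F is not w*-LRC. -/

import Mathlib

open ZeroAtInfty

/-- The weak-* topology on the dual of `X`: the topology induced by pointwise
evaluation. -/
noncomputable def wstarTopology (X : Type*) [NormedAddCommGroup X] [NormedSpace ℝ X] :
    TopologicalSpace (X →L[ℝ] ℝ) :=
  TopologicalSpace.induced (fun (f : X →L[ℝ] ℝ) (x : X) => f x) inferInstance

/-- A set `E ⊆ X*` is w*-LRC if every point of `E` has a weak-*-open neighbourhood `U`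
such that the norm closure of `E ∩ U` is norm compact. -/
def WStarLRC {X : Type*} [NormedAddCommGroup X] [NormedSpace ℝ X]
    (E : Set (X →L[ℝ] ℝ)) : Prop :=
  ∀ y ∈ E, ∃ U : Set (X →L[ℝ] ℝ),
    @IsOpen _ (wstarTopology X) U ∧ y ∈ U ∧ IsCompact (closure (E ∩ U))

/-- The `n`-th coordinate functional on `c₀`. -/
noncomputable def coordFunctional (n : ℕ) : C₀(ℕ, ℝ) →L[ℝ] ℝ :=
  LinearMap.mkContinuous
    { toFun := fun f => f n
      map_add' := fun f g => rfl
      map_smul' := fun c f => rfl } 1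
    (fun f => by
      simpa using (f.toBCF.norm_coe_le_norm n).trans (le_of_eq f.norm_toBCF_eq_norm))

/-- The indicator of `{n}` as an element of `c₀`. -/
noncomputable def deltaC0 (n : ℕ) : C₀(ℕ, ℝ) :=
  ⟨⟨fun m => if m = n then 1 else 0, continuous_of_discreteTopology⟩, by
    rw [Filter.cocompact_eq_cofinite]
    apply Filter.Tendsto.congr' _ tendsto_const_nhds
    filter_upwards [Set.Finite.eventually_cofinite_notMem (Set.finite_singleton n)] with m hm
    simp_all⟩

lemma deltaC0_apply (n m : ℕ) : deltaC0 n m = if m = n then 1 else 0 := rfl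

lemma coordFunctional_apply (n : ℕ) (f : C₀(ℕ, ℝ)) : coordFunctional n f = f n := rfl

lemma norm_deltaC0_le (n : ℕ) : ‖deltaC0 n‖ ≤ 1 := by
  rw [← ZeroAtInftyContinuousMap.norm_toBCF_eq_norm]
  refine (BoundedContinuousFunction.norm_le zero_le_one).2 fun m => ?_
  show ‖deltaC0 n m‖ ≤ 1
  rw [deltaC0_apply]
  split <;> simp

lemma one_le_dist_coord {n m : ℕ} (h : n ≠ m) :
    1 ≤ ‖coordFunctional n - coordFunctional m‖ := by
  have hval : (coordFunctional n - coordFunctional m) (deltaC0 n) = 1 := by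
    simp [coordFunctional_apply, deltaC0_apply, (Ne.symm h)]
  calc (1 : ℝ) = ‖(coordFunctional n - coordFunctional m) (deltaC0 n)‖ := by
        rw [hval]; simp
    _ ≤ ‖coordFunctional n - coordFunctional m‖ * ‖deltaC0 n‖ :=
        (coordFunctional n - coordFunctional m).le_opNorm (deltaC0 n)
    _ ≤ ‖coordFunctional n - coordFunctional m‖ * 1 := by
        have h1 := norm_deltaC0_le n
        have h0 : (0:ℝ) ≤ ‖coordFunctional n - coordFunctional m‖ := by
          exact norm_nonneg (coordFunctional n - coordFunctional m)
        nlinarith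
    _ = _ := mul_one _

lemma tendsto_c0 (a : C₀(ℕ, ℝ)) : Filter.Tendsto (fun n => a n) Filter.atTop (nhds 0) := by
  have := a.zero_at_infty'
  rwa [Filter.cocompact_eq_cofinite, Nat.cofinite_eq_atTop] at this

/-- In the dual of `c₀`, the set `E` of coordinate functionals and the set `{0}` are
each w*-LRC, but their union `E ∪ {0}` is not w*-LRC. -/
theorem coord_functionals_union_zero_not_wStarLRC :
    WStarLRC (Set.range coordFunctional) ∧
    WStarLRC ({0} : Set (C₀(ℕ, ℝ) →L[ℝ] ℝ)) ∧
    ¬ WStarLRC (Set.range coordFunctional ∪ {0}) := by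
  refine ⟨?_, ?_, ?_⟩
  · rintro y ⟨n, rfl⟩
    refine ⟨(fun (f : C₀(ℕ, ℝ) →L[ℝ] ℝ) (x : C₀(ℕ, ℝ)) => f x) ⁻¹'
      {g : C₀(ℕ, ℝ) → ℝ | 1/2 < g (deltaC0 n)}, ?_, ?_, ?_⟩
    · exact isOpen_induced_iff.2 ⟨_, isOpen_lt continuous_const (continuous_apply (deltaC0 n)), rfl⟩
    · show (1:ℝ)/2 < coordFunctional n (deltaC0 n)
      simp [coordFunctional_apply, deltaC0_apply]; norm_num
    · have heq : Set.range coordFunctional ∩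
          ((fun (f : C₀(ℕ, ℝ) →L[ℝ] ℝ) (x : C₀(ℕ, ℝ)) => f x) ⁻¹'
            {g : C₀(ℕ, ℝ) → ℝ | 1/2 < g (deltaC0 n)}) = {coordFunctional n} := by
        apply Set.eq_singleton_iff_unique_mem.2
        constructor
        · refine ⟨⟨n, rfl⟩, ?_⟩
          show (1:ℝ)/2 < coordFunctional n (deltaC0 n)
          simp [coordFunctional_apply, deltaC0_apply]; norm_num
        · rintro x ⟨⟨m, rfl⟩, hx⟩
          have hx' : (1:ℝ)/2 < coordFunctional m (deltaC0 n) := hx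
          rw [coordFunctional_apply, deltaC0_apply] at hx'
          by_cases hmn : m = n
          · rw [hmn]
          · simp [hmn] at hx'; norm_num at hx'
      rw [heq, closure_singleton]
      exact isCompact_singleton
  · rintro y rfl
    refine ⟨Set.univ, @isOpen_univ _ (wstarTopology _), trivial, ?_⟩
    rw [Set.inter_univ, closure_singleton]
    exact isCompact_singleton
  · intro h
    obtain ⟨U, hUopen, hU0, hK⟩ := h 0 (Or.inr rfl)
    obtain ⟨V, hVopen, rfl⟩ := isOpen_induced_iff.mp hUopen
    obtain ⟨I, u, hu, hsub⟩ := isOpen_pi_iff.mp hVopen _ hU0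
    -- eventually all coordinates land in the basic neighbourhood
    have hev : ∀ᶠ n in Filter.atTop, ∀ a ∈ I, (a : C₀(ℕ, ℝ)) n ∈ u a := by
      rw [Filter.eventually_all_finset]
      intro a ha
      have h0 : (0 : ℝ) ∈ u a := by simpa using (hu a ha).2
      exact (tendsto_c0 a).eventually ((hu a ha).1.mem_nhds h0)
    obtain ⟨N, hN⟩ := Filter.eventually_atTop.mp hev
    set ev := fun (f : C₀(ℕ, ℝ) →L[ℝ] ℝ) (x : C₀(ℕ, ℝ)) => f x
    have hmemU : ∀ n ≥ N, coordFunctional n ∈ ev ⁻¹' V := by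
      intro n hn
      apply hsub
      intro a ha
      simpa [ev, coordFunctional_apply] using hN n hn a ha
    have hS : coordFunctional '' Set.Ici N ⊆
        closure ((Set.range coordFunctional ∪ {0}) ∩ (ev ⁻¹' V)) := by
      rintro x ⟨n, hn, rfl⟩
      exact subset_closure ⟨Or.inl ⟨n, rfl⟩, hmemU n hn⟩
    obtain ⟨t, -, htfin, htcover⟩ :=
      finite_cover_balls_of_compact hK (e := 1/2) (by norm_num)
    have hex : ∀ n ∈ Set.Ici N, ∃ y, y ∈ t ∧ coordFunctional n ∈ Metric.ball y (1/2) := by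
      intro n hn
      have := htcover (hS ⟨n, hn, rfl⟩)
      simpa using this
    classical
    set g : ℕ → (C₀(ℕ, ℝ) →L[ℝ] ℝ) := fun n =>
      if h : ∃ y, y ∈ t ∧ coordFunctional n ∈ Metric.ball y (1/2) then h.choose else 0 with hg
    have hmaps : Set.MapsTo g (Set.Ici N) t := by
      intro n hn
      rw [hg]
      simp only [dif_pos (hex n hn)]
      exact (hex n hn).choose_spec.1
    have hball : ∀ n ∈ Set.Ici N, coordFunctional n ∈ Metric.ball (g n) (1/2) := by
      intro n hn
      rw [hg]
      simp only [dif_pos (hex n hn)]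
      exact (hex n hn).choose_spec.2
    obtain ⟨n, hn, m, hm, hne, heqg⟩ :=
      (Set.Ici_infinite N).exists_ne_map_eq_of_mapsTo hmaps htfin
    have h1 : dist (coordFunctional n) (coordFunctional m) < 1 := by
      calc dist (coordFunctional n) (coordFunctional m)
          ≤ dist (coordFunctional n) (g n) + dist (g n) (coordFunctional m) := dist_triangle _ _ _
        _ < 1/2 + 1/2 := by
            apply add_lt_add
            · exact hball n hn
            · rw [dist_comm, heqg]
              exact hball m hm
        _ = 1 := by norm_num
    have h2 : (1:ℝ) ≤ dist (coordFunctional n) (coordFunctional m) := by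
      have hd : dist (coordFunctional n) (coordFunctional m) =
          ‖coordFunctional n - coordFunctional m‖ := by exact dist_eq_norm (coordFunctional n) (coordFunctional m)
      rw [hd]
      exact one_le_dist_coord hne
    linarith
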